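/- arXiv:1605.04388 — 2 statements merged into one kernel-verified Lean document; each statement's English description precedes it below -/
import Mathlib

section
/- Let H ∈ (1/2, 1) and β ∈ (1−2H, 1], set α_H = H(2H−1) and φ(y) = α_H |y|^{2H−2} for y ≠ 0. Then there exists a constant C > 0, depending only on H and β, such that for every τ > 0, every integer m ≥ 1 (with grid points t_k = kτ for k = 0, 1, ..., m) and every λ > 0, one has Σ_{i=0}^{m−1} Σ_{j=0}^{m−1} ∫_{t_j}^{t_{j+1}} ∫_{t_i}^{t_{i+1}} ( e^{−λ(t_m−u)} − e^{−λ(t_m−t_i)} ) ( e^{−λ(t_m−v)} − e^{−λ(t_m−t_j)} ) φ(u−v) du dv ≤ C τ^{2H+β−1} λ^{β−1}. -/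
open MeasureTheory Set Real intervalIntegral

section Aux

lemma aux_one_sub_exp_le (x : ℝ) : 1 - Real.exp (-x) ≤ x := by
  nlinarith [Real.add_one_le_exp (-x)]

lemma aux_abs_rpow_ii {a : ℝ} (ha : -1 < a) (p q : ℝ) :
    IntervalIntegrable (fun x : ℝ => |x| ^ a) volume p q := by
  have key : ∀ c : ℝ, 0 ≤ c → IntervalIntegrable (fun x : ℝ => |x| ^ a) volume 0 c := by
    intro c hc
    have h1 : IntervalIntegrable (fun x : ℝ => x ^ a) volume 0 c :=
      intervalIntegrable_rpow' ha
    rw [intervalIntegrable_iff] at h1 ⊢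
    refine h1.congr_fun ?_ measurableSet_uIoc
    intro x hx
    rw [uIoc_of_le hc] at hx
    show x ^ a = |x| ^ a
    rw [abs_of_nonneg hx.1.le]
  have key2 : ∀ c : ℝ, IntervalIntegrable (fun x : ℝ => |x| ^ a) volume 0 c := by
    intro c
    rcases le_total 0 c with hc | hc
    · exact key c hc
    · rw [IntervalIntegrable.iff_comp_neg]
      simp only [abs_neg, neg_zero]
      simpa using key (-c) (by linarith)
  exact (key2 p).symm.trans (key2 q)

lemma aux_ker_ii {a : ℝ} (ha : -1 < a) (v p q : ℝ) :
    IntervalIntegrable (fun u : ℝ => |u - v| ^ a) volume p q := by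
  have := (aux_abs_rpow_ii ha (p - v) (q - v)).comp_sub_right v
  simpa using this

lemma aux_ker_integrableOn {a : ℝ} (ha : -1 < a) (v p q : ℝ) (hpq : p ≤ q) :
    IntegrableOn (fun u : ℝ => |u - v| ^ a) (Ioo p q) volume := by
  have := aux_ker_ii ha v p q
  rwa [intervalIntegrable_iff_integrableOn_Ioo_of_le hpq] at this

lemma aux_rpow_subadd {p : ℝ} (hp : 0 ≤ p) (hp1 : p ≤ 1) {x y : ℝ} (hx : 0 ≤ x) (hy : 0 ≤ y) :
    (x + y) ^ p ≤ x ^ p + y ^ p := by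
  have := NNReal.rpow_add_le_add_rpow x.toNNReal y.toNNReal hp hp1
  have h := NNReal.coe_le_coe.2 this
  push_cast at h
  rwa [Real.coe_toNNReal x hx, Real.coe_toNNReal y hy] at h

lemma aux_int_rpow_le {a : ℝ} (ha : -1 < a) (ha0 : a ≤ 0) {s t : ℝ} (h0 : 0 ≤ s) (hst : s ≤ t) :
    ∫ x in s..t, x ^ a ≤ (t - s) ^ (a + 1) / (a + 1) := by
  rw [integral_rpow (Or.inl ha)]
  have ha1 : 0 < a + 1 := by linarith
  have key : t ^ (a + 1) - s ^ (a + 1) ≤ (t - s) ^ (a + 1) := by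
    have h2 : t ^ (a + 1) ≤ s ^ (a + 1) + (t - s) ^ (a + 1) := by
      have := aux_rpow_subadd ha1.le (by linarith) h0 (by linarith : (0:ℝ) ≤ t - s)
      simpa using this
    linarith
  gcongr

lemma aux_reflect (a P Q : ℝ) :
    ∫ x in P..Q, |x| ^ a = ∫ x in (-Q)..(-P), |x| ^ a := by
  rw [← integral_comp_neg (fun x : ℝ => |x| ^ a)]
  apply integral_congr
  intro x _
  simp [abs_neg]

lemma aux_abs_int_le {a : ℝ} (ha : -1 < a) (ha0 : a ≤ 0) {P Q : ℝ} (h0 : 0 ≤ P) (hPQ : P ≤ Q) :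
    ∫ x in P..Q, |x| ^ a ≤ (Q - P) ^ (a + 1) / (a + 1) := by
  have : ∫ x in P..Q, |x| ^ a = ∫ x in P..Q, x ^ a := by
    apply integral_congr
    intro x hx
    rw [uIcc_of_le hPQ] at hx
    simp only
    rw [abs_of_nonneg (le_trans h0 hx.1)]
  rw [this]
  exact aux_int_rpow_le ha ha0 h0 hPQ

lemma aux_ker_bound {a : ℝ} (ha : -1 < a) (ha0 : a ≤ 0) (v p q : ℝ) (hpq : p ≤ q) :
    ∫ u in Ioo p q, |u - v| ^ a ≤ 2 * ((q - p) ^ (a + 1) / (a + 1)) := by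
  have ha1 : 0 < a + 1 := by linarith
  have hLnn : (0:ℝ) ≤ (q - p) ^ (a+1) / (a+1) :=
    div_nonneg (rpow_nonneg (by linarith) _) ha1.le
  have h1 : ∫ u in Ioo p q, |u - v| ^ a = ∫ u in p..q, |u - v| ^ a := by
    rw [integral_of_le hpq, integral_Ioc_eq_integral_Ioo]
  have h2 : ∫ u in p..q, |u - v| ^ a = ∫ x in (p - v)..(q - v), |x| ^ a :=
    integral_comp_sub_right (a := p) (b := q) (fun x : ℝ => |x| ^ a) v
  rw [h1, h2]
  set P := p - v with hP
  set Q := q - v with hQ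
  have hPQ : P ≤ Q := by rw [hP, hQ]; linarith
  have hL : Q - P = q - p := by rw [hP, hQ]; ring
  have mono : ∀ {x y : ℝ}, 0 ≤ x → x ≤ y → x ^ (a+1) / (a+1) ≤ y ^ (a+1) / (a+1) := by
    intro x y hx hxy
    gcongr
  rcases le_total 0 P with h0 | h0
  · calc ∫ x in P..Q, |x| ^ a ≤ (Q - P) ^ (a + 1) / (a + 1) := aux_abs_int_le ha ha0 h0 hPQ
      _ ≤ 2 * ((q - p) ^ (a + 1) / (a + 1)) := by rw [hL]; linarith
  · rcases le_total Q 0 with hQ0 | hQ0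
    · rw [aux_reflect]
      calc ∫ x in (-Q)..(-P), |x| ^ a ≤ (-P - -Q) ^ (a + 1) / (a + 1) :=
            aux_abs_int_le ha ha0 (by linarith) (by linarith)
        _ ≤ 2 * ((q - p) ^ (a + 1) / (a + 1)) := by
            have he : -P - -Q = Q - P := by ring
            rw [he, hL]; linarith
    · have hsplit : (∫ x in P..0, |x| ^ a) + ∫ x in (0:ℝ)..Q, |x| ^ a
          = ∫ x in P..Q, |x| ^ a :=
        integral_add_adjacent_intervals (aux_abs_rpow_ii ha P 0) (aux_abs_rpow_ii ha 0 Q)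
      rw [← hsplit]
      have hb1 : ∫ x in P..0, |x| ^ a ≤ (q - p) ^ (a + 1) / (a + 1) := by
        rw [aux_reflect]
        calc ∫ x in (-0:ℝ)..(-P), |x| ^ a = ∫ x in (0:ℝ)..(-P), |x| ^ a := by norm_num
          _ ≤ (-P - 0) ^ (a + 1) / (a + 1) := aux_abs_int_le ha ha0 le_rfl (by linarith)
          _ ≤ (q - p) ^ (a + 1) / (a + 1) := mono (by linarith) (by linarith)
      have hb2 : ∫ x in (0:ℝ)..Q, |x| ^ a ≤ (q - p) ^ (a + 1) / (a + 1) := by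
        calc ∫ x in (0:ℝ)..Q, |x| ^ a ≤ (Q - 0) ^ (a + 1) / (a + 1) :=
              aux_abs_int_le ha ha0 le_rfl hQ0
          _ ≤ (q - p) ^ (a + 1) / (a + 1) := mono (by linarith) (by linarith)
      linarith

/-- Gamma-type integrability. -/
lemma aux_gamma_integrable {s l : ℝ} (hs : -1 < s) (hl : 0 < l) :
    IntegrableOn (fun t : ℝ => t ^ s * Real.exp (-(l * t))) (Ioi (0:ℝ)) := by
  have := integrableOn_rpow_mul_exp_neg_mul_rpow hs zero_lt_one hl
  refine this.congr_fun (fun x hx => ?_) measurableSet_Ioi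
  simp only [Real.rpow_one]
  ring_nf

/-- Gamma-type integral value. -/
lemma aux_gamma_val {s l : ℝ} (hs : 0 < s) (hl : 0 < l) :
    ∫ t in Ioi (0:ℝ), t ^ (s - 1) * Real.exp (-(l * t)) = (1/l) ^ s * Real.Gamma s :=
  Real.integral_rpow_mul_exp_neg_mul_Ioi hs hl

/-- integrability of `exp(-(l(T-u))) |u - v|^a` on an interval. -/
lemma int_expker {a l T v p q : ℝ} (ha : -1 < a) (hl : 0 < l) (hpq : p ≤ q) :
    IntegrableOn (fun u : ℝ => Real.exp (-(l * (T - u))) * |u - v| ^ a) (Ioo p q) volume := by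
  apply Integrable.bdd_mul (c := Real.exp (-(l * (T - q)))) (aux_ker_integrableOn ha v p q hpq)
  · exact (Real.continuous_exp.comp (by continuity)).aestronglyMeasurable
  · filter_upwards [ae_restrict_mem measurableSet_Ioo] with u hu
    rw [Real.norm_eq_abs, Real.abs_exp]
    apply Real.exp_le_exp.2
    nlinarith [hu.2]

/-- inner integral bound, uniform in `v ≤ T`. -/
lemma inner_bound {a l T v p q : ℝ} (ha : -1 < a) (ha0 : a ≤ 0) (hl : 0 < l)
    (hpq : p ≤ q) (hqT : q ≤ T) (hv : v ≤ T) :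
    ∫ u in Ioo p q, Real.exp (-(l * (T - v))) * (Real.exp (-(l * (T - u))) * |u - v| ^ a)
      ≤ 2 * ((q - p) ^ (a + 1) / (a + 1)) := by
  rw [MeasureTheory.integral_const_mul]
  have h1 : ∫ u in Ioo p q, Real.exp (-(l * (T - u))) * |u - v| ^ a
      ≤ ∫ u in Ioo p q, |u - v| ^ a := by
    apply integral_mono_of_nonneg
    · filter_upwards [ae_restrict_mem measurableSet_Ioo] with u _
      positivity
    · exact aux_ker_integrableOn ha v p q hpq
    · filter_upwards [ae_restrict_mem measurableSet_Ioo] with u hu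
      have h2 : Real.exp (-(l * (T - u))) ≤ 1 := by
        rw [Real.exp_le_one_iff]
        nlinarith [hu.2]
      nlinarith [Real.rpow_nonneg (abs_nonneg (u - v)) a, Real.exp_pos (-(l * (T - u)))]
  have h2 : Real.exp (-(l * (T - v))) ≤ 1 := by
    rw [Real.exp_le_one_iff]; nlinarith
  have h3 : (0:ℝ) ≤ ∫ u in Ioo p q, Real.exp (-(l * (T - u))) * |u - v| ^ a := by
    apply setIntegral_nonneg measurableSet_Ioo
    intro u _
    positivity
  calc Real.exp (-(l * (T - v))) * ∫ u in Ioo p q, Real.exp (-(l * (T - u))) * |u - v| ^ a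
      ≤ 1 * ∫ u in Ioo p q, Real.exp (-(l * (T - u))) * |u - v| ^ a := by
        apply mul_le_mul_of_nonneg_right h2 h3
    _ = ∫ u in Ioo p q, Real.exp (-(l * (T - u))) * |u - v| ^ a := one_mul _
    _ ≤ ∫ u in Ioo p q, |u - v| ^ a := h1
    _ ≤ 2 * ((q - p) ^ (a + 1) / (a + 1)) := aux_ker_bound ha ha0 v p q hpq

/-- the map `v ↦ ∫_{(p,q)} e^{-l(T-v)} e^{-l(T-u)} |u-v|^a du` is integrable on `(r,s)`. -/
lemma outer_integrable {a l T p q r s : ℝ} (ha : -1 < a) (ha0 : a ≤ 0) (hl : 0 < l)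
    (hpq : p ≤ q) (hqT : q ≤ T) (hrs : r ≤ s) (hsT : s ≤ T) :
    IntegrableOn (fun v : ℝ =>
      ∫ u in Ioo p q, Real.exp (-(l * (T - v))) * (Real.exp (-(l * (T - u))) * |u - v| ^ a))
      (Ioo r s) volume := by
  apply Measure.integrableOn_of_bounded (M := 2 * ((q - p) ^ (a + 1) / (a + 1)))
  · exact (measure_Ioo_lt_top).ne
  · have hmeas : AEStronglyMeasurable
        (fun z : ℝ × ℝ =>
          Real.exp (-(l * (T - z.1))) * (Real.exp (-(l * (T - z.2))) * |z.2 - z.1| ^ a))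
        (volume.prod (volume.restrict (Ioo p q))) := by
      apply Measurable.aestronglyMeasurable
      fun_prop
    exact hmeas.integral_prod_right'
  · filter_upwards [ae_restrict_mem measurableSet_Ioo] with v hv
    have hnn : (0:ℝ) ≤ ∫ u in Ioo p q,
        Real.exp (-(l * (T - v))) * (Real.exp (-(l * (T - u))) * |u - v| ^ a) := by
      apply setIntegral_nonneg measurableSet_Ioo
      intro u _
      positivity
    rw [Real.norm_eq_abs, abs_of_nonneg hnn]
    exact inner_bound ha ha0 hl hpq hqT (le_trans hv.2.le hsT)

end Aux

section Core

/-- pointwise bound for the `v`-section integral over the whole interval. -/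
lemma psi_bound {a l T v : ℝ} (ha : -1 < a) (ha0 : a ≤ 0) (hl : 0 < l)
    (hv0 : 0 < v) (hvT : v < T) :
    ∫ u in Ioo 0 T, Real.exp (-(l * (T - v))) * (Real.exp (-(l * (T - u))) * |u - v| ^ a)
      ≤ Real.exp (-(l * (T - v))) * ((T - v) ^ (a + 1) / (a + 1))
        + Real.exp (-(l * (T - v))) * Real.exp (-(l * (T - v)))
            * ((1/l) ^ (a + 1) * Real.Gamma (a + 1)) := by
  have ha1 : 0 < a + 1 := by linarith
  have hT : 0 < T := hv0.trans hvT
  rw [MeasureTheory.integral_const_mul]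
  have ii1 : IntervalIntegrable (fun u : ℝ => Real.exp (-(l * (T - u))) * |u - v| ^ a)
      volume 0 v := by
    rw [intervalIntegrable_iff_integrableOn_Ioo_of_le hv0.le]
    exact int_expker ha hl hv0.le
  have ii2 : IntervalIntegrable (fun u : ℝ => Real.exp (-(l * (T - u))) * |u - v| ^ a)
      volume v T := by
    rw [intervalIntegrable_iff_integrableOn_Ioo_of_le hvT.le]
    exact int_expker ha hl hvT.le
  have hB : ∫ u in Ioo 0 T, Real.exp (-(l * (T - u))) * |u - v| ^ a
      = (∫ u in (0:ℝ)..v, Real.exp (-(l * (T - u))) * |u - v| ^ a)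
        + ∫ u in v..T, Real.exp (-(l * (T - u))) * |u - v| ^ a := by
    rw [integral_add_adjacent_intervals ii1 ii2, integral_of_le hT.le,
      integral_Ioc_eq_integral_Ioo]
  -- part 2
  have iiR : IntervalIntegrable (fun u : ℝ => (u - v) ^ a) volume v T := by
    have := (intervalIntegrable_rpow' (a := 0) (b := T - v) ha).comp_sub_right v
    simpa using this
  have part2 : ∫ u in v..T, Real.exp (-(l * (T - u))) * |u - v| ^ a
      ≤ (T - v) ^ (a + 1) / (a + 1) := by
    have step1 : ∫ u in v..T, Real.exp (-(l * (T - u))) * |u - v| ^ a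
        ≤ ∫ u in v..T, (u - v) ^ a := by
      apply integral_mono_on hvT.le ii2 iiR
      intro u hu
      have h1 : |u - v| = u - v := abs_of_nonneg (by linarith [hu.1])
      rw [h1]
      have h2 : Real.exp (-(l * (T - u))) ≤ 1 := by
        rw [Real.exp_le_one_iff]
        nlinarith [hu.2]
      exact mul_le_of_le_one_left (rpow_nonneg (by linarith [hu.1]) a) h2
    have step2 : ∫ u in v..T, (u - v) ^ a = ∫ x in (0:ℝ)..(T - v), x ^ a := by
      have := integral_comp_sub_right (a := v) (b := T) (fun x : ℝ => x ^ a) v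
      simpa using this
    have step3 : ∫ x in (0:ℝ)..(T - v), x ^ a ≤ (T - v) ^ (a + 1) / (a + 1) := by
      have := aux_int_rpow_le ha ha0 (le_refl (0:ℝ)) (by linarith : (0:ℝ) ≤ T - v)
      simpa using this
    linarith [step1, step2 ▸ step3]
  -- part 1
  have part1 : ∫ u in (0:ℝ)..v, Real.exp (-(l * (T - u))) * |u - v| ^ a
      ≤ Real.exp (-(l * (T - v))) * ((1/l) ^ (a + 1) * Real.Gamma (a + 1)) := by
    have e1 : ∫ u in (0:ℝ)..v, Real.exp (-(l * (T - u))) * |u - v| ^ a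
        = ∫ u in (0:ℝ)..v, Real.exp (-(l * (T - v)))
            * ((v - u) ^ a * Real.exp (-(l * (v - u)))) := by
      apply integral_congr
      intro u hu
      rw [uIcc_of_le hv0.le] at hu
      have h1 : |u - v| = v - u := by
        rw [abs_sub_comm]
        exact abs_of_nonneg (by linarith [hu.2])
      have h2 : Real.exp (-(l * (T - u)))
          = Real.exp (-(l * (T - v))) * Real.exp (-(l * (v - u))) := by
        rw [← Real.exp_add]
        congr 1
        ring
      simp only
      rw [h1, h2]
      ring
    rw [e1, intervalIntegral.integral_const_mul]
    have e2 : ∫ u in (0:ℝ)..v, (v - u) ^ a * Real.exp (-(l * (v - u)))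
        = ∫ r in (0:ℝ)..v, r ^ a * Real.exp (-(l * r)) := by
      have := integral_comp_sub_left (a := (0:ℝ)) (b := v)
        (fun r : ℝ => r ^ a * Real.exp (-(l * r))) v
      simpa using this
    rw [e2]
    have e3 : ∫ r in (0:ℝ)..v, r ^ a * Real.exp (-(l * r))
        ≤ (1/l) ^ (a + 1) * Real.Gamma (a + 1) := by
      rw [integral_of_le hv0.le]
      have hval : ∫ t in Ioi (0:ℝ), t ^ a * Real.exp (-(l * t))
          = (1/l) ^ (a + 1) * Real.Gamma (a + 1) := by
        have := aux_gamma_val (s := a + 1) (by linarith) hl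
        rw [show a + 1 - 1 = a by ring] at this
        exact this
      rw [← hval]
      apply setIntegral_mono_set (aux_gamma_integrable ha hl)
      · filter_upwards [ae_restrict_mem measurableSet_Ioi] with r hr
        exact mul_nonneg (Real.rpow_nonneg (le_of_lt hr) a) (Real.exp_nonneg _)
      · exact (Ioc_subset_Ioi_self).eventuallyLE
    exact mul_le_mul_of_nonneg_left e3 (Real.exp_nonneg _)
  rw [hB, mul_add]
  have final2 : Real.exp (-(l * (T - v)))
      * ∫ u in v..T, Real.exp (-(l * (T - u))) * |u - v| ^ a
      ≤ Real.exp (-(l * (T - v))) * ((T - v) ^ (a + 1) / (a + 1)) :=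
    mul_le_mul_of_nonneg_left part2 (Real.exp_nonneg _)
  have final1 : Real.exp (-(l * (T - v)))
      * ∫ u in (0:ℝ)..v, Real.exp (-(l * (T - u))) * |u - v| ^ a
      ≤ Real.exp (-(l * (T - v))) * Real.exp (-(l * (T - v)))
          * ((1/l) ^ (a + 1) * Real.Gamma (a + 1)) := by
    have := mul_le_mul_of_nonneg_left part1 (Real.exp_nonneg (-(l * (T - v))))
    linarith [this]
  linarith

/-- integral of the tail bound. -/
lemma tail_le {a l T : ℝ} (ha : -1 < a) (ha0 : a ≤ 0) (hl : 0 < l) (hT : 0 ≤ T) :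
    ∫ v in Ioo 0 T, (Real.exp (-(l * (T - v))) * ((T - v) ^ (a + 1) / (a + 1))
        + Real.exp (-(l * (T - v))) * Real.exp (-(l * (T - v)))
            * ((1/l) ^ (a + 1) * Real.Gamma (a + 1)))
      ≤ (1/l) ^ (a + 2) * Real.Gamma (a + 2) / (a + 1)
        + 1/(2*l) * ((1/l) ^ (a + 1) * Real.Gamma (a + 1)) := by
  have ha1 : 0 < a + 1 := by linarith
  set h : ℝ → ℝ := fun t => Real.exp (-(l * t)) * (t ^ (a + 1) / (a + 1))
      + Real.exp (-(2 * l * t)) * ((1/l) ^ (a + 1) * Real.Gamma (a + 1)) with hh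
  have hint1 : IntegrableOn (fun t : ℝ => t ^ (a + 1) * Real.exp (-(l * t))) (Ioi (0:ℝ)) :=
    aux_gamma_integrable (by linarith) hl
  have hint2 : IntegrableOn (fun t : ℝ => t ^ (0:ℝ) * Real.exp (-(2 * l * t))) (Ioi (0:ℝ)) :=
    aux_gamma_integrable (by norm_num) (by linarith)
  have j1 : IntegrableOn (fun t : ℝ => Real.exp (-(l * t)) * (t ^ (a + 1) / (a + 1)))
      (Ioi (0:ℝ)) := by
    apply (hint1.mul_const (1/(a+1))).congr
    apply Filter.Eventually.of_forall
    intro t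
    simp only
    ring
  have j2 : IntegrableOn (fun t : ℝ => Real.exp (-(2 * l * t))
      * ((1/l) ^ (a + 1) * Real.Gamma (a + 1))) (Ioi (0:ℝ)) := by
    apply (hint2.mul_const ((1/l) ^ (a + 1) * Real.Gamma (a + 1))).congr
    apply Filter.Eventually.of_forall
    intro t
    simp only [Real.rpow_zero]
    ring
  have hint : IntegrableOn h (Ioi (0:ℝ)) := by
    apply (j1.add j2).congr
    apply Filter.Eventually.of_forall
    intro t
    simp only [hh, Pi.add_apply]
  -- step 1: convert to a reflected interval integral of h
  have e0 : ∫ v in Ioo 0 T, (Real.exp (-(l * (T - v))) * ((T - v) ^ (a + 1) / (a + 1))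
        + Real.exp (-(l * (T - v))) * Real.exp (-(l * (T - v)))
            * ((1/l) ^ (a + 1) * Real.Gamma (a + 1)))
      = ∫ v in (0:ℝ)..T, h (T - v) := by
    rw [integral_of_le hT, integral_Ioc_eq_integral_Ioo]
    apply setIntegral_congr_fun measurableSet_Ioo
    intro v _
    have hee : Real.exp (-(l * (T - v))) * Real.exp (-(l * (T - v)))
        = Real.exp (-(2 * l * (T - v))) := by
      rw [← Real.exp_add]; congr 1; ring
    simp only [hh, hee]
  have e1 : ∫ v in (0:ℝ)..T, h (T - v) = ∫ t in (0:ℝ)..T, h t := by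
    have := integral_comp_sub_left (a := (0:ℝ)) (b := T) h T
    simpa using this
  have e2 : ∫ t in (0:ℝ)..T, h t ≤ ∫ t in Ioi (0:ℝ), h t := by
    rw [integral_of_le hT]
    apply setIntegral_mono_set hint
    · filter_upwards [ae_restrict_mem measurableSet_Ioi] with t ht
      simp only [hh]
      have g1 : (0:ℝ) ≤ t ^ (a + 1) := Real.rpow_nonneg (le_of_lt ht) _
      have g2 : (0:ℝ) ≤ (1/l) ^ (a + 1) := Real.rpow_nonneg (by positivity) _
      have g3 : (0:ℝ) ≤ Real.Gamma (a + 1) := Real.Gamma_nonneg_of_nonneg ha1.le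
      have g4 : (0:ℝ) ≤ Real.exp (-(l * t)) := Real.exp_nonneg _
      have g5 : (0:ℝ) ≤ Real.exp (-(2 * l * t)) := Real.exp_nonneg _
      have g6 : (0:ℝ) ≤ t ^ (a + 1) / (a + 1) := div_nonneg g1 ha1.le
      exact add_nonneg (mul_nonneg g4 g6) (mul_nonneg g5 (mul_nonneg g2 g3))
    · exact (Ioc_subset_Ioi_self).eventuallyLE
  have e3 : ∫ t in Ioi (0:ℝ), h t
      = (1/l) ^ (a + 2) * Real.Gamma (a + 2) / (a + 1)
        + 1/(2*l) * ((1/l) ^ (a + 1) * Real.Gamma (a + 1)) := by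
    simp only [hh]
    rw [integral_add j1 j2]
    have v1 : ∫ t in Ioi (0:ℝ), Real.exp (-(l * t)) * (t ^ (a + 1) / (a + 1))
        = (1/l) ^ (a + 2) * Real.Gamma (a + 2) / (a + 1) := by
      have hval := aux_gamma_val (s := a + 2) (by linarith) hl
      rw [show a + 2 - 1 = a + 1 by ring] at hval
      rw [show (1/l) ^ (a + 2) * Real.Gamma (a + 2) / (a + 1)
          = ((1/l) ^ (a + 2) * Real.Gamma (a + 2)) * (1/(a+1)) by ring, ← hval,
        ← MeasureTheory.integral_mul_const]
      apply setIntegral_congr_fun measurableSet_Ioi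
      intro t _
      simp only
      ring
    have v2 : ∫ t in Ioi (0:ℝ), Real.exp (-(2 * l * t))
          * ((1/l) ^ (a + 1) * Real.Gamma (a + 1))
        = 1/(2*l) * ((1/l) ^ (a + 1) * Real.Gamma (a + 1)) := by
      have hval := aux_gamma_val (s := 1) one_pos (by linarith : 0 < 2 * l)
      rw [show (1:ℝ) - 1 = 0 by ring, Real.Gamma_one, Real.rpow_one, mul_one] at hval
      rw [← hval, ← MeasureTheory.integral_mul_const]
      apply setIntegral_congr_fun measurableSet_Ioi
      intro t _
      simp only [Real.rpow_zero]
      ring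
    rw [v1, v2]
  calc _ = ∫ v in (0:ℝ)..T, h (T - v) := e0
    _ = ∫ t in (0:ℝ)..T, h t := e1
    _ ≤ ∫ t in Ioi (0:ℝ), h t := e2
    _ = _ := e3

end Core

set_option maxHeartbeats 2000000 in
/-- For `H ∈ (1/2, 1)`, `β ∈ (1-2H, 1]` and
`φ(y) = H(2H-1)|y|^{2H-2}`, there is `C > 0` depending only on `H` and `β` such that
for every step size `τ > 0`, every `m ≥ 1` (grid points `t_k = kτ`) and every `λ > 0`,
`Σ_{i,j=0}^{m-1} ∫_{t_j}^{t_{j+1}} ∫_{t_i}^{t_{i+1}}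
  (e^{-λ(t_m-u)} - e^{-λ(t_m-t_i)}) (e^{-λ(t_m-v)} - e^{-λ(t_m-t_j)}) φ(u-v) du dv
  ≤ C τ^{2H+β-1} λ^{β-1}`. -/
theorem stmt_13 (H : ℝ) (hH : H ∈ Set.Ioo (1/2 : ℝ) 1)
    (β : ℝ) (hβ : β ∈ Set.Ioc (1 - 2*H) 1) :
    ∃ C : ℝ, 0 < C ∧ ∀ τ : ℝ, 0 < τ → ∀ m : ℕ, 1 ≤ m → ∀ l : ℝ, 0 < l →
      (∑ i ∈ Finset.range m, ∑ j ∈ Finset.range m,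
        ∫ v in Set.Ioo ((j : ℝ) * τ) (((j : ℝ) + 1) * τ),
          ∫ u in Set.Ioo ((i : ℝ) * τ) (((i : ℝ) + 1) * τ),
            (Real.exp (-l * ((m : ℝ) * τ - u)) - Real.exp (-l * ((m : ℝ) * τ - (i : ℝ) * τ))) *
            (Real.exp (-l * ((m : ℝ) * τ - v)) - Real.exp (-l * ((m : ℝ) * τ - (j : ℝ) * τ))) *
            (H * (2*H - 1) * |u - v| ^ (2*H - 2)))
        ≤ C * τ ^ (2*H + β - 1) * l ^ (β - 1) := by
  obtain ⟨hH1, hH2⟩ := hH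
  obtain ⟨hβ1, hβ2⟩ := hβ
  have ha : (-1:ℝ) < 2*H - 2 := by linarith
  have ha0 : (2*H - 2 : ℝ) ≤ 0 := by linarith
  have ha1 : (0:ℝ) < (2*H - 2) + 1 := by linarith
  have hαH : (0:ℝ) < H * (2*H - 1) := by nlinarith
  have hΓ1 : (0:ℝ) < Real.Gamma (2*H) := Real.Gamma_pos_of_pos (by linarith)
  have hΓ2 : (0:ℝ) < Real.Gamma (2*H - 1) := Real.Gamma_pos_of_pos (by linarith)
  set D : ℝ := Real.Gamma (2*H) / (2*H - 1) + Real.Gamma (2*H - 1) / 2 with hD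
  have hD0 : 0 < D := by
    rw [hD]
    have : 0 < Real.Gamma (2*H) / (2*H - 1) := div_pos hΓ1 (by linarith)
    linarith
  refine ⟨H * (2*H - 1) * D, by positivity, ?_⟩
  intro τ hτ m hm l hl
  simp only [neg_mul]
  set a : ℝ := 2*H - 2 with haa
  set T : ℝ := (m:ℝ) * τ with hTdef
  have hT0 : 0 < T := by
    rw [hTdef]
    have : (1:ℝ) ≤ (m:ℝ) := by exact_mod_cast hm
    nlinarith
  set M : ℝ := min 1 (l * τ) with hM
  have hM0 : 0 ≤ M := le_min (by norm_num) (by positivity)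
  set c : ℝ := M^2 * (H * (2*H - 1)) with hc
  have hc0 : 0 ≤ c := by positivity
  -- grid facts
  have hgrid : ∀ i : ℕ, i ∈ Finset.range m →
      (0:ℝ) ≤ (i:ℝ) * τ ∧ (i:ℝ) * τ ≤ ((i:ℝ) + 1) * τ ∧ ((i:ℝ) + 1) * τ ≤ T := by
    intro i hi
    rw [Finset.mem_range] at hi
    have h1 : (0:ℝ) ≤ (i:ℝ) := Nat.cast_nonneg i
    have h2 : (i:ℝ) + 1 ≤ (m:ℝ) := by exact_mod_cast Nat.succ_le_of_lt hi
    refine ⟨by positivity, by nlinarith, by rw [hTdef]; nlinarith⟩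
  have hIsub : ∀ i : ℕ, i ∈ Finset.range m →
      Ioo ((i:ℝ) * τ) (((i:ℝ) + 1) * τ) ⊆ Ioo 0 T := by
    intro i hi
    obtain ⟨g1, g2, g3⟩ := hgrid i hi
    exact Ioo_subset_Ioo (by linarith) g3
  -- the kernel and section integrals
  have kerint : ∀ (v p q : ℝ), p ≤ q →
      IntegrableOn (fun u : ℝ => Real.exp (-(l * (T - u))) * |u - v| ^ a) (Ioo p q) volume :=
    fun v p q h => int_expker ha hl h
  -- STEP A : pointwise box bound
  have stepA : ∀ i ∈ Finset.range m, ∀ j ∈ Finset.range m,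
      (∫ v in Ioo ((j:ℝ) * τ) (((j:ℝ) + 1) * τ),
        ∫ u in Ioo ((i:ℝ) * τ) (((i:ℝ) + 1) * τ),
          (Real.exp (-(l * (T - u))) - Real.exp (-(l * (T - (i:ℝ) * τ)))) *
          (Real.exp (-(l * (T - v))) - Real.exp (-(l * (T - (j:ℝ) * τ)))) *
          (H * (2*H - 1) * |u - v| ^ a))
      ≤ c * ∫ v in Ioo ((j:ℝ) * τ) (((j:ℝ) + 1) * τ),
          (∫ u in Ioo ((i:ℝ) * τ) (((i:ℝ) + 1) * τ),
            Real.exp (-(l * (T - v))) * (Real.exp (-(l * (T - u))) * |u - v| ^ a)) := by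
    intro i hi j hj
    obtain ⟨gi1, gi2, gi3⟩ := hgrid i hi
    obtain ⟨gj1, gj2, gj3⟩ := hgrid j hj
    -- the generic one-factor bound
    have factor : ∀ k : ℕ, k ∈ Finset.range m → ∀ w : ℝ, w ∈ Ioo ((k:ℝ) * τ) (((k:ℝ) + 1) * τ) →
        0 ≤ Real.exp (-(l * (T - w))) - Real.exp (-(l * (T - (k:ℝ) * τ))) ∧
        Real.exp (-(l * (T - w))) - Real.exp (-(l * (T - (k:ℝ) * τ)))
          ≤ M * Real.exp (-(l * (T - w))) := by
      intro k _ w hw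
      have hsplit : Real.exp (-(l * (T - (k:ℝ) * τ)))
          = Real.exp (-(l * (T - w))) * Real.exp (-(l * (w - (k:ℝ) * τ))) := by
        rw [← Real.exp_add]; congr 1; ring
      constructor
      · rw [hsplit]
        have h1 : Real.exp (-(l * (w - (k:ℝ) * τ))) ≤ 1 := by
          rw [Real.exp_le_one_iff]
          nlinarith [hw.1]
        nlinarith [Real.exp_pos (-(l * (T - w)))]
      · rw [hsplit]
        have key : 1 - Real.exp (-(l * (w - (k:ℝ) * τ))) ≤ M := by
          apply le_min
          · linarith [Real.exp_nonneg (-(l * (w - (k:ℝ) * τ)))]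
          · have := aux_one_sub_exp_le (l * (w - (k:ℝ) * τ))
            have h2 : l * (w - (k:ℝ) * τ) ≤ l * τ := by nlinarith [hw.1, hw.2]
            linarith
        calc Real.exp (-(l * (T - w)))
              - Real.exp (-(l * (T - w))) * Real.exp (-(l * (w - (k:ℝ) * τ)))
            = Real.exp (-(l * (T - w))) * (1 - Real.exp (-(l * (w - (k:ℝ) * τ)))) := by ring
          _ ≤ Real.exp (-(l * (T - w))) * M :=
              mul_le_mul_of_nonneg_left key (Real.exp_nonneg _)
          _ = M * Real.exp (-(l * (T - w))) := mul_comm _ _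
    -- inner bound at fixed v ∈ I j
    have inner : ∀ v ∈ Ioo ((j:ℝ) * τ) (((j:ℝ) + 1) * τ),
        (∫ u in Ioo ((i:ℝ) * τ) (((i:ℝ) + 1) * τ),
          (Real.exp (-(l * (T - u))) - Real.exp (-(l * (T - (i:ℝ) * τ)))) *
          (Real.exp (-(l * (T - v))) - Real.exp (-(l * (T - (j:ℝ) * τ)))) *
          (H * (2*H - 1) * |u - v| ^ a))
        ≤ c * ∫ u in Ioo ((i:ℝ) * τ) (((i:ℝ) + 1) * τ),
            Real.exp (-(l * (T - v))) * (Real.exp (-(l * (T - u))) * |u - v| ^ a) := by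
      intro v hv
      rw [MeasureTheory.integral_const_mul, ← mul_assoc]
      have hint : IntegrableOn
          (fun u : ℝ => Real.exp (-(l * (T - u))) * |u - v| ^ a)
          (Ioo ((i:ℝ) * τ) (((i:ℝ) + 1) * τ)) volume := kerint v _ _ gi2
      have goal2 : (∫ u in Ioo ((i:ℝ) * τ) (((i:ℝ) + 1) * τ),
          (Real.exp (-(l * (T - u))) - Real.exp (-(l * (T - (i:ℝ) * τ)))) *
          (Real.exp (-(l * (T - v))) - Real.exp (-(l * (T - (j:ℝ) * τ)))) *
          (H * (2*H - 1) * |u - v| ^ a))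
          ≤ ∫ u in Ioo ((i:ℝ) * τ) (((i:ℝ) + 1) * τ),
            (c * Real.exp (-(l * (T - v)))) * (Real.exp (-(l * (T - u))) * |u - v| ^ a) := by
        apply integral_mono_of_nonneg
        · filter_upwards [ae_restrict_mem measurableSet_Ioo] with u hu
          obtain ⟨hA0, _⟩ := factor i hi u hu
          obtain ⟨hB0, _⟩ := factor j hj v hv
          have hk : (0:ℝ) ≤ H * (2*H - 1) * |u - v| ^ a := by
            have := Real.rpow_nonneg (abs_nonneg (u - v)) a
            positivity
          positivity
        · exact (hint.const_mul _)
        · filter_upwards [ae_restrict_mem measurableSet_Ioo] with u hu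
          obtain ⟨hA0, hA⟩ := factor i hi u hu
          obtain ⟨hB0, hB⟩ := factor j hj v hv
          have hk : (0:ℝ) ≤ |u - v| ^ a := Real.rpow_nonneg (abs_nonneg (u - v)) a
          have e1 : (0:ℝ) ≤ M * Real.exp (-(l * (T - u))) := by positivity
          have step : (Real.exp (-(l * (T - u))) - Real.exp (-(l * (T - (i:ℝ) * τ)))) *
              (Real.exp (-(l * (T - v))) - Real.exp (-(l * (T - (j:ℝ) * τ))))
              ≤ (M * Real.exp (-(l * (T - u)))) * (M * Real.exp (-(l * (T - v)))) :=
            mul_le_mul hA hB hB0 e1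
          have hkH : (0:ℝ) ≤ H * (2*H - 1) * |u - v| ^ a := by positivity
          calc (Real.exp (-(l * (T - u))) - Real.exp (-(l * (T - (i:ℝ) * τ)))) *
              (Real.exp (-(l * (T - v))) - Real.exp (-(l * (T - (j:ℝ) * τ)))) *
              (H * (2*H - 1) * |u - v| ^ a)
              ≤ ((M * Real.exp (-(l * (T - u)))) * (M * Real.exp (-(l * (T - v))))) *
                (H * (2*H - 1) * |u - v| ^ a) := by
                apply mul_le_mul_of_nonneg_right step hkH
            _ = (c * Real.exp (-(l * (T - v)))) *
                (Real.exp (-(l * (T - u))) * |u - v| ^ a) := by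
                rw [hc]; ring
      calc _ ≤ _ := goal2
        _ = c * Real.exp (-(l * (T - v))) *
            ∫ u in Ioo ((i:ℝ) * τ) (((i:ℝ) + 1) * τ),
              Real.exp (-(l * (T - u))) * |u - v| ^ a := by
            rw [MeasureTheory.integral_const_mul]
    -- outer integration of the inner bound
    rw [← MeasureTheory.integral_const_mul]
    apply integral_mono_of_nonneg
    · filter_upwards [ae_restrict_mem measurableSet_Ioo] with v hv
      apply setIntegral_nonneg measurableSet_Ioo
      intro u hu
      obtain ⟨hA0, _⟩ := factor i hi u hu
      obtain ⟨hB0, _⟩ := factor j hj v hv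
      have hk : (0:ℝ) ≤ |u - v| ^ a := Real.rpow_nonneg (abs_nonneg (u - v)) a
      positivity
    · exact (outer_integrable ha ha0 hl gi2 gi3 gj2 gj3).const_mul c
    · filter_upwards [ae_restrict_mem measurableSet_Ioo] with v hv
      exact inner v hv
  -- disjointness of the grid intervals
  have hdisj : ∀ x y : ℕ, x ≠ y →
      Disjoint (Ioo ((x:ℝ) * τ) (((x:ℝ) + 1) * τ)) (Ioo ((y:ℝ) * τ) (((y:ℝ) + 1) * τ)) := by
    intro x y hxy
    rcases Nat.lt_or_ge x y with h | h
    · apply Set.disjoint_left.2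
      intro z hz1 hz2
      have : (x:ℝ) + 1 ≤ (y:ℝ) := by exact_mod_cast Nat.succ_le_of_lt h
      nlinarith [hz1.2, hz2.1]
    · have h' : y < x := lt_of_le_of_ne h (Ne.symm hxy)
      apply Set.disjoint_right.2
      intro z hz1 hz2
      have : (y:ℝ) + 1 ≤ (x:ℝ) := by exact_mod_cast Nat.succ_le_of_lt h'
      nlinarith [hz1.2, hz2.1]
  have hpair : (↑(Finset.range m) : Set ℕ).Pairwise
      (Function.onFun Disjoint (fun i : ℕ => Ioo ((i:ℝ) * τ) (((i:ℝ) + 1) * τ))) :=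
    fun x _ y _ hxy => hdisj x y hxy
  -- nonnegativity of the comparison integrand
  have hFnn : ∀ v u : ℝ, 0 ≤ Real.exp (-(l * (T - v))) * (Real.exp (-(l * (T - u))) * |u - v| ^ a) := by
    intro v u
    have : (0:ℝ) ≤ |u - v| ^ a := Real.rpow_nonneg (abs_nonneg _) a
    positivity
  have hQnn : ∀ (p q v : ℝ), 0 ≤ ∫ u in Ioo p q,
      Real.exp (-(l * (T - v))) * (Real.exp (-(l * (T - u))) * |u - v| ^ a) := by
    intro p q v
    exact setIntegral_nonneg measurableSet_Ioo (fun u _ => hFnn v u)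
  -- STEP B : at fixed v, the sum over i is at most the full-interval integral
  have sumG : ∀ v : ℝ,
      (∑ i ∈ Finset.range m, ∫ u in Ioo ((i:ℝ) * τ) (((i:ℝ) + 1) * τ),
        Real.exp (-(l * (T - v))) * (Real.exp (-(l * (T - u))) * |u - v| ^ a))
      ≤ ∫ u in Ioo 0 T,
        Real.exp (-(l * (T - v))) * (Real.exp (-(l * (T - u))) * |u - v| ^ a) := by
    intro v
    have hbi := MeasureTheory.integral_biUnion_finset (Finset.range m)
      (f := fun u => Real.exp (-(l * (T - v))) * (Real.exp (-(l * (T - u))) * |u - v| ^ a))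
      (fun i _ => measurableSet_Ioo) hpair
      (fun i hi => ((kerint v _ _ (hgrid i hi).2.1).const_mul _))
    rw [← hbi]
    apply setIntegral_mono_set ((kerint v 0 T hT0.le).const_mul _)
    · filter_upwards [] with u
      exact hFnn v u
    · exact (Set.iUnion₂_subset (fun i hi => hIsub i hi)).eventuallyLE
  have stepB : ∀ j ∈ Finset.range m,
      (∫ v in Ioo ((j:ℝ) * τ) (((j:ℝ) + 1) * τ),
        ∑ i ∈ Finset.range m, ∫ u in Ioo ((i:ℝ) * τ) (((i:ℝ) + 1) * τ),
          Real.exp (-(l * (T - v))) * (Real.exp (-(l * (T - u))) * |u - v| ^ a))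
      ≤ ∫ v in Ioo ((j:ℝ) * τ) (((j:ℝ) + 1) * τ),
          ∫ u in Ioo 0 T,
            Real.exp (-(l * (T - v))) * (Real.exp (-(l * (T - u))) * |u - v| ^ a) := by
    intro j hj
    apply integral_mono_of_nonneg
    · filter_upwards [] with v
      exact Finset.sum_nonneg (fun i _ => hQnn _ _ v)
    · exact outer_integrable ha ha0 hl hT0.le le_rfl (hgrid j hj).2.1 (hgrid j hj).2.2
    · filter_upwards [] with v
      exact sumG v
  -- STEP D : bound the full double integral
  have hcontr : Continuous (fun x : ℝ => x ^ (a + 1)) := by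
    rw [continuous_iff_continuousAt]
    intro x
    exact Real.continuousAt_rpow_const x (a + 1) (Or.inr ha1.le)
  have stepD : (∫ v in Ioo 0 T, ∫ u in Ioo 0 T,
        Real.exp (-(l * (T - v))) * (Real.exp (-(l * (T - u))) * |u - v| ^ a))
      ≤ (1/l) ^ (a + 2) * Real.Gamma (a + 2) / (a + 1)
        + 1/(2*l) * ((1/l) ^ (a + 1) * Real.Gamma (a + 1)) := by
    have hfunint : IntegrableOn (fun v : ℝ =>
        Real.exp (-(l * (T - v))) * ((T - v) ^ (a + 1) / (a + 1))
        + Real.exp (-(l * (T - v))) * Real.exp (-(l * (T - v)))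
            * ((1/l) ^ (a + 1) * Real.Gamma (a + 1))) (Ioo 0 T) volume := by
      have hge : Continuous (fun v : ℝ => Real.exp (-(l * (T - v)))) :=
        Real.continuous_exp.comp ((continuous_const.mul (continuous_const.sub continuous_id)).neg)
      have hgt : Continuous (fun v : ℝ => (T - v) ^ (a + 1)) :=
        hcontr.comp (continuous_const.sub continuous_id)
      have hcont2 : Continuous (fun v : ℝ =>
          Real.exp (-(l * (T - v))) * ((T - v) ^ (a + 1) / (a + 1))
          + Real.exp (-(l * (T - v))) * Real.exp (-(l * (T - v)))
              * ((1/l) ^ (a + 1) * Real.Gamma (a + 1))) :=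
        (hge.mul (hgt.div_const _)).add (((hge.mul hge)).mul continuous_const)
      have := hcont2.intervalIntegrable (μ := volume) 0 T
      rwa [intervalIntegrable_iff_integrableOn_Ioo_of_le hT0.le] at this
    calc (∫ v in Ioo 0 T, ∫ u in Ioo 0 T,
          Real.exp (-(l * (T - v))) * (Real.exp (-(l * (T - u))) * |u - v| ^ a))
        ≤ ∫ v in Ioo 0 T,
            (Real.exp (-(l * (T - v))) * ((T - v) ^ (a + 1) / (a + 1))
            + Real.exp (-(l * (T - v))) * Real.exp (-(l * (T - v)))
                * ((1/l) ^ (a + 1) * Real.Gamma (a + 1))) := by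
          apply integral_mono_of_nonneg
          · filter_upwards [] with v
            exact hQnn 0 T v
          · exact hfunint
          · filter_upwards [ae_restrict_mem measurableSet_Ioo] with v hv
            exact psi_bound ha ha0 hl hv.1 hv.2
      _ ≤ _ := tail_le ha ha0 hl hT0.le
  -- STEP E : arithmetic comparison of constants
  have hKeq : (1/l) ^ (a + 2) * Real.Gamma (a + 2) / (a + 1)
      + 1/(2*l) * ((1/l) ^ (a + 1) * Real.Gamma (a + 1)) = (1/l) ^ (2*H) * D := by
    rw [haa, show 2*H - 2 + 2 = 2*H by ring, show 2*H - 2 + 1 = 2*H - 1 by ring, hD]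
    have h2 : (1/l : ℝ) ^ (2*H) = (1/l) ^ (2*H - 1) * (1/l) := by
      rw [← Real.rpow_add_one (by positivity : (1/l:ℝ) ≠ 0) (2*H - 1)]
      congr 1
      ring
    have e : (1:ℝ)/(2*l) = (1/l)/2 := by
      rw [div_div, mul_comm]
    rw [h2, e]
    ring
  have hθ1 : (0:ℝ) < 2*H + β - 1 := by linarith
  have hθ2 : (2*H + β - 1 : ℝ) ≤ 2 := by linarith
  have hM2 : M^2 ≤ (l*τ) ^ (2*H + β - 1) := by
    rcases le_total 1 (l*τ) with h1 | h1
    · have hMe : M = 1 := min_eq_left h1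
      rw [hMe, one_pow]
      calc (1:ℝ) = (l*τ) ^ (0:ℝ) := (Real.rpow_zero _).symm
        _ ≤ (l*τ) ^ (2*H + β - 1) := Real.rpow_le_rpow_of_exponent_le h1 hθ1.le
    · have hMe : M = l*τ := min_eq_right h1
      rw [hMe, ← Real.rpow_natCast (l*τ) 2]
      apply Real.rpow_le_rpow_of_exponent_ge (by positivity) h1
      push_cast
      exact hθ2
  have hMx : M^2 * (1/l) ^ (2*H) ≤ τ ^ (2*H + β - 1) * l ^ (β - 1) := by
    have hpos : (0:ℝ) < l ^ (2*H) := Real.rpow_pos_of_pos hl _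
    have hinv : (1/l : ℝ) ^ (2*H) = (l ^ (2*H))⁻¹ := by
      rw [one_div, Real.inv_rpow hl.le]
    have hr : τ ^ (2*H + β - 1) * l ^ (β - 1) * l ^ (2*H) = (l*τ) ^ (2*H + β - 1) := by
      rw [mul_assoc, ← Real.rpow_add hl, show β - 1 + 2*H = 2*H + β - 1 by ring,
        ← Real.mul_rpow hτ.le hl.le, mul_comm τ l]
    calc M^2 * (1/l) ^ (2*H) ≤ (l*τ) ^ (2*H + β - 1) * (1/l) ^ (2*H) := by
          apply mul_le_mul_of_nonneg_right hM2 (Real.rpow_nonneg (by positivity) _)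
      _ = τ ^ (2*H + β - 1) * l ^ (β - 1) := by
          rw [← hr, hinv]
          field_simp
  -- final assembly
  calc (∑ i ∈ Finset.range m, ∑ j ∈ Finset.range m,
        ∫ v in Ioo ((j:ℝ) * τ) (((j:ℝ) + 1) * τ),
          ∫ u in Ioo ((i:ℝ) * τ) (((i:ℝ) + 1) * τ),
            (Real.exp (-(l * (T - u))) - Real.exp (-(l * (T - (i:ℝ) * τ)))) *
            (Real.exp (-(l * (T - v))) - Real.exp (-(l * (T - (j:ℝ) * τ)))) *
            (H * (2*H - 1) * |u - v| ^ a))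
      ≤ ∑ i ∈ Finset.range m, ∑ j ∈ Finset.range m,
          c * ∫ v in Ioo ((j:ℝ) * τ) (((j:ℝ) + 1) * τ),
            (∫ u in Ioo ((i:ℝ) * τ) (((i:ℝ) + 1) * τ),
              Real.exp (-(l * (T - v))) * (Real.exp (-(l * (T - u))) * |u - v| ^ a)) :=
        Finset.sum_le_sum (fun i hi => Finset.sum_le_sum (fun j hj => stepA i hi j hj))
    _ = ∑ j ∈ Finset.range m, ∑ i ∈ Finset.range m,
          c * ∫ v in Ioo ((j:ℝ) * τ) (((j:ℝ) + 1) * τ),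
            (∫ u in Ioo ((i:ℝ) * τ) (((i:ℝ) + 1) * τ),
              Real.exp (-(l * (T - v))) * (Real.exp (-(l * (T - u))) * |u - v| ^ a)) :=
        Finset.sum_comm
    _ = c * ∑ j ∈ Finset.range m, ∑ i ∈ Finset.range m,
          ∫ v in Ioo ((j:ℝ) * τ) (((j:ℝ) + 1) * τ),
            (∫ u in Ioo ((i:ℝ) * τ) (((i:ℝ) + 1) * τ),
              Real.exp (-(l * (T - v))) * (Real.exp (-(l * (T - u))) * |u - v| ^ a)) := by
        rw [Finset.mul_sum]
        apply Finset.sum_congr rfl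
        intro j _
        rw [Finset.mul_sum]
    _ = c * ∑ j ∈ Finset.range m,
          ∫ v in Ioo ((j:ℝ) * τ) (((j:ℝ) + 1) * τ),
            ∑ i ∈ Finset.range m,
              (∫ u in Ioo ((i:ℝ) * τ) (((i:ℝ) + 1) * τ),
                Real.exp (-(l * (T - v))) * (Real.exp (-(l * (T - u))) * |u - v| ^ a)) := by
        congr 1
        apply Finset.sum_congr rfl
        intro j hj
        exact (integral_finset_sum (Finset.range m) (fun i hi =>
          outer_integrable ha ha0 hl (hgrid i hi).2.1 (hgrid i hi).2.2
            (hgrid j hj).2.1 (hgrid j hj).2.2)).symm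
    _ ≤ c * ∑ j ∈ Finset.range m,
          ∫ v in Ioo ((j:ℝ) * τ) (((j:ℝ) + 1) * τ),
            ∫ u in Ioo 0 T,
              Real.exp (-(l * (T - v))) * (Real.exp (-(l * (T - u))) * |u - v| ^ a) :=
        mul_le_mul_of_nonneg_left (Finset.sum_le_sum (fun j hj => stepB j hj)) hc0
    _ = c * ∫ v in ⋃ j ∈ Finset.range m, Ioo ((j:ℝ) * τ) (((j:ℝ) + 1) * τ),
            ∫ u in Ioo 0 T,
              Real.exp (-(l * (T - v))) * (Real.exp (-(l * (T - u))) * |u - v| ^ a) := by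
        rw [MeasureTheory.integral_biUnion_finset (Finset.range m)
          (fun j _ => measurableSet_Ioo) hpair
          (fun j hj => outer_integrable ha ha0 hl hT0.le le_rfl
            (hgrid j hj).2.1 (hgrid j hj).2.2)]
    _ ≤ c * ∫ v in Ioo 0 T,
            ∫ u in Ioo 0 T,
              Real.exp (-(l * (T - v))) * (Real.exp (-(l * (T - u))) * |u - v| ^ a) := by
        apply mul_le_mul_of_nonneg_left ?_ hc0
        apply setIntegral_mono_set
          (outer_integrable ha ha0 hl hT0.le le_rfl hT0.le le_rfl)
        · filter_upwards [] with v
          exact hQnn 0 T v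
        · exact (Set.iUnion₂_subset (fun j hj => hIsub j hj)).eventuallyLE
    _ ≤ c * ((1/l) ^ (a + 2) * Real.Gamma (a + 2) / (a + 1)
          + 1/(2*l) * ((1/l) ^ (a + 1) * Real.Gamma (a + 1))) :=
        mul_le_mul_of_nonneg_left stepD hc0
    _ = (H * (2*H - 1) * D) * (M^2 * (1/l) ^ (2*H)) := by
        rw [hKeq, hc]; ring
    _ ≤ (H * (2*H - 1) * D) * (τ ^ (2*H + β - 1) * l ^ (β - 1)) :=
        mul_le_mul_of_nonneg_left hMx (by positivity)
    _ = H * (2*H - 1) * D * τ ^ (2*H + β - 1) * l ^ (β - 1) := by ring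
end

section
/- Let H ∈ (1/2, 1) and β ∈ (1−2H, 1], set α_H = H(2H−1) and φ(y) = α_H |y|^{2H−2} for y ≠ 0. Then there exists a constant C > 0, depending only on H and β, such that for every τ > 0 and λ > 0 with τλ > 1, and every integer m ≥ 1 (with grid points t_k = kτ), one has Σ_{i=0}^{m−1} Σ_{j=0}^{m−1} ∫_{t_j}^{t_{j+1}} ∫_{t_i}^{t_{i+1}} (1+τλ)^{−(m−i)} (1+τλ)^{−(m−j)} φ(u−v) du dv ≤ C τ^{2H+β−1} λ^{β−1}. -/
open MeasureTheory Set Real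

private lemma absRpowII {p : ℝ} (hp : -1 < p) (hp0 : p < 0) (a b : ℝ) :
    IntervalIntegrable (fun x : ℝ => |x| ^ p) volume a b := by
  have hmax : (fun x : ℝ => |x| ^ p) = fun x : ℝ => max (x ^ p) ((-x) ^ p) := by
    funext x
    rcases lt_trichotomy x 0 with hx | hx | hx
    · rw [abs_of_neg hx, max_eq_right]
      have hxp : x ^ p = (-x) ^ p * Real.cos (p * π) := by
        rw [Real.rpow_def_of_neg hx, Real.rpow_def_of_pos (by linarith : (0:ℝ) < -x)]
        rw [Real.log_neg_eq_log]
      rw [hxp]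
      exact mul_le_of_le_one_right (Real.rpow_nonneg (by linarith) _) (Real.cos_le_one _)
    · simp [hx, Real.zero_rpow (ne_of_lt hp0)]
    · rw [abs_of_pos hx, max_eq_left]
      have hxp : (-x) ^ p = x ^ p * Real.cos (p * π) := by
        rw [Real.rpow_def_of_neg (by linarith : -x < 0), Real.rpow_def_of_pos hx]
        rw [Real.log_neg_eq_log]
      rw [hxp]
      exact mul_le_of_le_one_right (Real.rpow_nonneg hx.le _) (Real.cos_le_one _)
  have h1 : IntervalIntegrable (fun x : ℝ => x ^ p) volume a b :=
    intervalIntegral.intervalIntegrable_rpow' hp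
  have h2 : IntervalIntegrable (fun x : ℝ => (-x) ^ p) volume a b := by
    have h := intervalIntegral.intervalIntegrable_rpow' (a := -a) (b := -b) hp
    have := (IntervalIntegrable.iff_comp_neg (f := fun x : ℝ => x ^ p) (by simp)).mp h
    simpa using this
  rw [hmax]
  rw [intervalIntegrable_iff] at h1 h2 ⊢
  exact h1.sup h2

private lemma keyPos {p : ℝ} (hp : -1 < p) (hp0 : p < 0) {A B : ℝ} (h0 : 0 ≤ A) (hAB : A ≤ B) :
    ∫ x in A..B, |x| ^ p ≤ (B - A) ^ (p + 1) / (p + 1) := by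
  have hq : 0 < p + 1 := by linarith
  have e1 : (∫ x in A..B, |x| ^ p) = ∫ x in A..B, x ^ p := by
    apply intervalIntegral.integral_congr
    intro x hx
    rw [uIcc_of_le hAB] at hx
    simp only
    rw [abs_of_nonneg (le_trans h0 hx.1)]
  have hf : IntervalIntegrable (fun x : ℝ => x ^ p) volume A B :=
    intervalIntegral.intervalIntegrable_rpow' hp
  have hg : IntervalIntegrable (fun x : ℝ => (x - A) ^ p) volume A B := by
    have := (intervalIntegral.intervalIntegrable_rpow' (a := 0) (b := B - A) hp).comp_sub_right A
    simpa using this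
  have hmono : (∫ x in A..B, x ^ p) ≤ ∫ x in A..B, (x - A) ^ p := by
    apply intervalIntegral.integral_mono_ae_restrict hAB hf hg
    have hA : ∀ᵐ x ∂(volume.restrict (Icc A B)), x ≠ A := by
      refine ae_iff.2 ?_
      have hs : {x : ℝ | ¬ x ≠ A} = {A} := by ext y; simp
      rw [hs, Measure.restrict_apply (measurableSet_singleton A)]
      exact measure_mono_null Set.inter_subset_left (measure_singleton A)
    filter_upwards [hA, ae_restrict_mem measurableSet_Icc] with x hxA hxIcc
    have h1 : 0 < x - A := by
      have := lt_of_le_of_ne hxIcc.1 (Ne.symm hxA)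
      linarith
    exact Real.rpow_le_rpow_of_nonpos h1 (by linarith) hp0.le
  have hcomp : (∫ x in A..B, (x - A) ^ p) = (B - A) ^ (p + 1) / (p + 1) := by
    rw [intervalIntegral.integral_comp_sub_right (fun x : ℝ => x ^ p) A]
    rw [integral_rpow (Or.inl hp)]
    rw [sub_self, Real.zero_rpow (ne_of_gt hq)]
    ring
  rw [e1, ← hcomp]; exact hmono

private lemma keyNeg {p : ℝ} (hp : -1 < p) (hp0 : p < 0) {A B : ℝ} (h0 : B ≤ 0) (hAB : A ≤ B) :
    ∫ x in A..B, |x| ^ p ≤ (B - A) ^ (p + 1) / (p + 1) := by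
  have e1 : (∫ x in A..B, |x| ^ p) = ∫ x in (-B)..(-A), |x| ^ p := by
    rw [← intervalIntegral.integral_comp_neg (fun x : ℝ => |x| ^ p)]
    simp
  rw [e1]
  have := keyPos hp hp0 (by linarith : (0:ℝ) ≤ -B) (by linarith : -B ≤ -A)
  simpa [show -A - -B = B - A from by ring] using this

private lemma keyAbs {p : ℝ} (hp : -1 < p) (hp0 : p < 0) {A B : ℝ} (hAB : A ≤ B) :
    ∫ x in A..B, |x| ^ p ≤ 2 * ((B - A) ^ (p + 1) / (p + 1)) := by
  have hq : 0 < p + 1 := by linarith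
  have hBA : (0:ℝ) ≤ B - A := by linarith
  have hnn : 0 ≤ (B - A) ^ (p + 1) / (p + 1) :=
    div_nonneg (Real.rpow_nonneg hBA _) hq.le
  rcases le_total 0 A with h0 | h0
  · linarith [keyPos hp hp0 h0 hAB]
  rcases le_total B 0 with hB | hB
  · linarith [keyNeg hp hp0 hB hAB]
  · have h1 := keyNeg hp hp0 (le_refl (0:ℝ)) h0
    have h2 := keyPos hp hp0 (le_refl (0:ℝ)) hB
    have hadd := intervalIntegral.integral_add_adjacent_intervals
      (absRpowII hp hp0 A 0) (absRpowII hp hp0 0 B)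
    have m1 : ((0:ℝ) - A) ^ (p + 1) ≤ (B - A) ^ (p + 1) :=
      Real.rpow_le_rpow (by linarith) (by linarith) hq.le
    have m2 : (B - (0:ℝ)) ^ (p + 1) ≤ (B - A) ^ (p + 1) :=
      Real.rpow_le_rpow (by linarith) (by linarith) hq.le
    have d1 : ((0:ℝ) - A) ^ (p + 1) / (p + 1) ≤ (B - A) ^ (p + 1) / (p + 1) :=
      (div_le_div_iff_of_pos_right hq).mpr m1
    have d2 : (B - (0:ℝ)) ^ (p + 1) / (p + 1) ≤ (B - A) ^ (p + 1) / (p + 1) :=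
      (div_le_div_iff_of_pos_right hq).mpr m2
    linarith

private lemma innerBound {p τ : ℝ} (hp : -1 < p) (hp0 : p < 0) (hτ : 0 < τ) (a v : ℝ) :
    (∫ u in Set.Ioo a (a + τ), |u - v| ^ p) ≤ 2 * (τ ^ (p + 1) / (p + 1)) := by
  have h1 : (∫ u in Set.Ioo a (a + τ), |u - v| ^ p) = ∫ u in a..(a + τ), |u - v| ^ p := by
    rw [intervalIntegral.integral_of_le (by linarith), MeasureTheory.integral_Ioc_eq_integral_Ioo]
  rw [h1]
  have h2 : (∫ u in a..(a + τ), |u - v| ^ p)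
      = ∫ x in (a - v)..(a + τ - v), |x| ^ p :=
    intervalIntegral.integral_comp_sub_right (fun x : ℝ => |x| ^ p) v
  rw [h2]
  have := keyAbs hp hp0 (show a - v ≤ a + τ - v by linarith)
  simpa [show a + τ - v - (a - v) = τ from by ring] using this

set_option maxHeartbeats 2000000 in
/-- For `H ∈ (1/2, 1)`, `β ∈ (1-2H, 1]` and
`φ(y) = H(2H-1)|y|^{2H-2}`, there is `C > 0` depending only on `H` and `β` such that
for every `τ > 0` and `λ > 0` with `τλ > 1`, and every `m ≥ 1` (grid points `t_k = kτ`),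
`Σ_{i,j=0}^{m-1} ∫_{t_j}^{t_{j+1}} ∫_{t_i}^{t_{i+1}}
  (1+τλ)^{-(m-i)} (1+τλ)^{-(m-j)} φ(u-v) du dv ≤ C τ^{2H+β-1} λ^{β-1}`. -/
theorem stmt_15 (H : ℝ) (hH : H ∈ Set.Ioo (1/2 : ℝ) 1)
    (β : ℝ) (hβ : β ∈ Set.Ioc (1 - 2*H) 1) :
    ∃ C : ℝ, 0 < C ∧ ∀ τ : ℝ, 0 < τ → ∀ l : ℝ, 0 < l → 1 < τ * l →
      ∀ m : ℕ, 1 ≤ m →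
      (∑ i ∈ Finset.range m, ∑ j ∈ Finset.range m,
        ∫ v in Set.Ioo ((j : ℝ) * τ) (((j : ℝ) + 1) * τ),
          ∫ u in Set.Ioo ((i : ℝ) * τ) (((i : ℝ) + 1) * τ),
            ((1 + τ * l)⁻¹) ^ (m - i) * ((1 + τ * l)⁻¹) ^ (m - j) *
              (H * (2*H - 1) * |u - v| ^ (2*H - 2)))
        ≤ C * τ ^ (2*H + β - 1) * l ^ (β - 1) := by
  obtain ⟨hH1, hH2⟩ := hH
  obtain ⟨hβ1, hβ2⟩ := hβ
  refine ⟨2, by norm_num, ?_⟩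
  intro τ hτ l hl hτl m hm
  set p : ℝ := 2*H - 2 with hpdef
  have hp : -1 < p := by simp only [hpdef]; linarith
  have hp0 : p < 0 := by simp only [hpdef]; linarith
  have hq : 0 < p + 1 := by linarith
  set c : ℝ := H * (2*H - 1) with hcdef
  have hc : 0 < c := by
    apply mul_pos (by linarith) (by linarith)
  set w : ℝ := (1 + τ * l)⁻¹ with hwdef
  have h1τl : (0:ℝ) < 1 + τ * l := by nlinarith
  have hw0 : 0 < w := inv_pos.mpr h1τl
  have hw1 : w < 1 := by
    rw [hwdef]
    rw [inv_lt_one_iff₀]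
    right; linarith
  set E : ℝ := 2 * H * τ ^ (2*H : ℝ) with hEdef
  set B0 : ℝ := 2 * (τ ^ (p + 1) / (p + 1)) with hB0def
  have hB0 : 0 ≤ B0 := by
    rw [hB0def]
    have := Real.rpow_nonneg hτ.le (p + 1)
    positivity
  -- pull constants out
  have hpull : ∀ i j : ℕ,
      (∫ v in Set.Ioo ((j : ℝ) * τ) (((j : ℝ) + 1) * τ),
          ∫ u in Set.Ioo ((i : ℝ) * τ) (((i : ℝ) + 1) * τ),
            w ^ (m - i) * w ^ (m - j) * (c * |u - v| ^ p))
        = (w ^ (m - i) * w ^ (m - j) * c) *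
          ∫ v in Set.Ioo ((j : ℝ) * τ) (((j : ℝ) + 1) * τ),
            ∫ u in Set.Ioo ((i : ℝ) * τ) (((i : ℝ) + 1) * τ), |u - v| ^ p := by
    intro i j
    simp_rw [← mul_assoc, MeasureTheory.integral_const_mul]
  -- bound the double integral
  have hJ : ∀ i j : ℕ,
      (∫ v in Set.Ioo ((j : ℝ) * τ) (((j : ℝ) + 1) * τ),
          ∫ u in Set.Ioo ((i : ℝ) * τ) (((i : ℝ) + 1) * τ), |u - v| ^ p)
        ≤ B0 * τ := by
    intro i j
    set F : ℝ → ℝ := fun v =>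
      ∫ u in Set.Ioo ((i : ℝ) * τ) (((i : ℝ) + 1) * τ), |u - v| ^ p with hFdef
    have hFle : ∀ v : ℝ, F v ≤ B0 := by
      intro v
      have := innerBound hp hp0 hτ ((i : ℝ) * τ) v
      rw [show (i : ℝ) * τ + τ = ((i : ℝ) + 1) * τ from by ring] at this
      exact this
    by_cases hInt : IntegrableOn F (Set.Ioo ((j : ℝ) * τ) (((j : ℝ) + 1) * τ)) volume
    · calc (∫ v in Set.Ioo ((j : ℝ) * τ) (((j : ℝ) + 1) * τ), F v)
          ≤ ∫ _v in Set.Ioo ((j : ℝ) * τ) (((j : ℝ) + 1) * τ), B0 :=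
            setIntegral_mono_on hInt
              (integrableOn_const measure_Ioo_lt_top.ne)
              measurableSet_Ioo (fun v _ => hFle v)
        _ = B0 * τ := by
            rw [setIntegral_const, Real.volume_real_Ioo_of_le (show (j : ℝ) * τ ≤ ((j : ℝ) + 1) * τ by nlinarith),
              show ((j : ℝ) + 1) * τ - (j : ℝ) * τ = τ from by ring,
              smul_eq_mul, mul_comm]
    · rw [integral_undef hInt]
      exact mul_nonneg hB0 hτ.le
  -- per-term bound
  have hEB : c * (B0 * τ) = E := by
    rw [hB0def, hEdef, hcdef, hpdef]
    rw [show (2*H - 2 + 1 : ℝ) = 2*H - 1 from by ring]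
    have h2H : τ ^ (2*H - 1 : ℝ) * τ = τ ^ (2*H : ℝ) := by
      rw [← Real.rpow_add_one hτ.ne' (2*H - 1)]
      ring_nf
    have hne : (2*H - 1 : ℝ) ≠ 0 := by linarith
    field_simp
    rw [show H * 2 - 1 = 2 * H - 1 by ring, show H * 2 = 2 * H by ring, mul_assoc, h2H, mul_div_cancel_left₀ _ hne]
  have hterm : ∀ i j : ℕ,
      (∫ v in Set.Ioo ((j : ℝ) * τ) (((j : ℝ) + 1) * τ),
          ∫ u in Set.Ioo ((i : ℝ) * τ) (((i : ℝ) + 1) * τ),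
            w ^ (m - i) * w ^ (m - j) * (c * |u - v| ^ p))
        ≤ w ^ (m - i) * w ^ (m - j) * E := by
    intro i j
    rw [hpull i j]
    have h1 : (w ^ (m - i) * w ^ (m - j) * c) *
        (∫ v in Set.Ioo ((j : ℝ) * τ) (((j : ℝ) + 1) * τ),
          ∫ u in Set.Ioo ((i : ℝ) * τ) (((i : ℝ) + 1) * τ), |u - v| ^ p)
        ≤ (w ^ (m - i) * w ^ (m - j) * c) * (B0 * τ) := by
      apply mul_le_mul_of_nonneg_left (hJ i j)
      positivity
    calc _ ≤ (w ^ (m - i) * w ^ (m - j) * c) * (B0 * τ) := h1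
      _ = w ^ (m - i) * w ^ (m - j) * (c * (B0 * τ)) := by ring
      _ = w ^ (m - i) * w ^ (m - j) * E := by rw [hEB]
  -- geometric sum bound
  have hG : (∑ i ∈ Finset.range m, w ^ (m - i)) ≤ (τ * l)⁻¹ := by
    have h1 : (∑ i ∈ Finset.range m, w ^ (m - i))
        = ∑ k ∈ Finset.range m, w ^ (k + 1) := by
      rw [← Finset.sum_range_reflect (fun k => w ^ (k + 1)) m]
      apply Finset.sum_congr rfl
      intro i hi
      have := Finset.mem_range.mp hi
      congr 1
      omega
    have h2 : (∑ k ∈ Finset.range m, w ^ (k + 1))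
        = w * ∑ k ∈ Finset.range m, w ^ k := by
      rw [Finset.mul_sum]
      apply Finset.sum_congr rfl
      intro k _
      rw [pow_succ]
      ring
    have h3 : (∑ k ∈ Finset.range m, w ^ k) ≤ (1 - w)⁻¹ := by
      rw [geom_sum_eq (ne_of_lt hw1)]
      have hden : 0 < 1 - w := by linarith
      have he : (w ^ m - 1) / (w - 1) = (1 - w ^ m) / (1 - w) := by
        rw [← neg_div_neg_eq]
        ring_nf
      rw [he, ← one_div]
      exact (div_le_div_iff_of_pos_right hden).mpr (by nlinarith [pow_nonneg hw0.le m])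
    have h4 : w * (1 - w)⁻¹ = (τ * l)⁻¹ := by
      rw [hwdef]
      have hx : τ * l ≠ 0 := by positivity
      have h1ne : (1 + τ * l) ≠ 0 := ne_of_gt h1τl
      field_simp
      ring
    calc (∑ i ∈ Finset.range m, w ^ (m - i))
        = w * ∑ k ∈ Finset.range m, w ^ k := by rw [h1, h2]
      _ ≤ w * (1 - w)⁻¹ := mul_le_mul_of_nonneg_left h3 hw0.le
      _ = (τ * l)⁻¹ := h4
  have hGnn : 0 ≤ ∑ i ∈ Finset.range m, w ^ (m - i) :=
    Finset.sum_nonneg fun i _ => pow_nonneg hw0.le _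
  have hEnn : 0 ≤ E := by
    rw [hEdef]
    have := Real.rpow_nonneg hτ.le (2*H : ℝ)
    nlinarith
  have hτl0 : 0 < τ * l := by positivity
  -- factor the double sum
  have hfac : ((∑ i ∈ Finset.range m, w ^ (m - i)) * (∑ j ∈ Finset.range m, w ^ (m - j))) * E
      = ∑ i ∈ Finset.range m, ∑ j ∈ Finset.range m, w ^ (m - i) * w ^ (m - j) * E := by
    rw [Finset.sum_mul_sum, Finset.sum_mul]
    apply Finset.sum_congr rfl
    intro i _
    rw [Finset.sum_mul]
  have hsum : (∑ i ∈ Finset.range m, ∑ j ∈ Finset.range m,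
      ∫ v in Set.Ioo ((j : ℝ) * τ) (((j : ℝ) + 1) * τ),
        ∫ u in Set.Ioo ((i : ℝ) * τ) (((i : ℝ) + 1) * τ),
          w ^ (m - i) * w ^ (m - j) * (c * |u - v| ^ p))
      ≤ ((∑ i ∈ Finset.range m, w ^ (m - i)) * (∑ j ∈ Finset.range m, w ^ (m - j))) * E := by
    rw [hfac]
    exact Finset.sum_le_sum fun i _ => Finset.sum_le_sum fun j _ => hterm i j
  have hstep : ((∑ i ∈ Finset.range m, w ^ (m - i)) * (∑ j ∈ Finset.range m, w ^ (m - j))) * E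
      ≤ ((τ * l)⁻¹ * (τ * l)⁻¹) * E := by
    apply mul_le_mul_of_nonneg_right ?_ hEnn
    exact mul_le_mul hG hG hGnn (inv_nonneg.mpr hτl0.le)
  -- core rpow inequality
  have hcore : τ ^ (2*H : ℝ) * ((τ * l)⁻¹ * (τ * l)⁻¹) ≤ τ ^ (2*H + β - 1) * l ^ (β - 1) := by
    have hkey : τ ^ (2*H : ℝ) ≤ τ ^ (2*H + β - 1) * l ^ (β - 1) * ((τ * l) * (τ * l)) := by
      have hid : τ ^ (2*H + β - 1 : ℝ) * l ^ (β - 1 : ℝ) * ((τ * l) * (τ * l))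
          = τ ^ (2*H : ℝ) * (τ * l) ^ (β + 1 : ℝ) := by
        rw [Real.mul_rpow hτ.le hl.le]
        rw [show ((τ * l) * (τ * l) : ℝ) = (τ * τ) * (l * l) from by ring]
        rw [show τ * τ = τ ^ (1 + 1 : ℝ) from by rw [Real.rpow_add hτ, Real.rpow_one]]
        rw [show l * l = l ^ (1 + 1 : ℝ) from by rw [Real.rpow_add hl, Real.rpow_one]]
        rw [show τ ^ (2*H + β - 1 : ℝ) * l ^ (β - 1 : ℝ) * (τ ^ (1 + 1 : ℝ) * l ^ (1 + 1 : ℝ))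
            = (τ ^ (2*H + β - 1 : ℝ) * τ ^ (1 + 1 : ℝ)) * (l ^ (β - 1 : ℝ) * l ^ (1 + 1 : ℝ))
            from by ring]
        rw [← Real.rpow_add hτ, ← Real.rpow_add hl]
        rw [show (2*H + β - 1 + (1 + 1) : ℝ) = 2*H + (β + 1) from by ring,
          show (β - 1 + (1 + 1) : ℝ) = β + 1 from by ring]
        rw [Real.rpow_add hτ]
        ring
      rw [hid]
      have hone : (1 : ℝ) ≤ (τ * l) ^ (β + 1 : ℝ) := by
        calc (1 : ℝ) = 1 ^ (β + 1 : ℝ) := (Real.one_rpow _).symm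
          _ ≤ (τ * l) ^ (β + 1 : ℝ) :=
            Real.rpow_le_rpow (by norm_num) hτl.le (by linarith)
      nlinarith [Real.rpow_nonneg hτ.le (2*H : ℝ)]
    have hinv : 0 ≤ (τ * l)⁻¹ * (τ * l)⁻¹ := by positivity
    calc τ ^ (2*H : ℝ) * ((τ * l)⁻¹ * (τ * l)⁻¹)
        ≤ (τ ^ (2*H + β - 1) * l ^ (β - 1) * ((τ * l) * (τ * l))) * ((τ * l)⁻¹ * (τ * l)⁻¹) :=
          mul_le_mul_of_nonneg_right hkey hinv
      _ = τ ^ (2*H + β - 1) * l ^ (β - 1) := by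
          field_simp
  have hfin : ((τ * l)⁻¹ * (τ * l)⁻¹) * E ≤ 2 * τ ^ (2*H + β - 1) * l ^ (β - 1) := by
    have hXnn : 0 ≤ τ ^ (2*H + β - 1 : ℝ) * l ^ (β - 1 : ℝ) :=
      mul_nonneg (Real.rpow_nonneg hτ.le _) (Real.rpow_nonneg hl.le _)
    have h1 : ((τ * l)⁻¹ * (τ * l)⁻¹) * E = 2 * H * (τ ^ (2*H : ℝ) * ((τ * l)⁻¹ * (τ * l)⁻¹)) := by
      rw [hEdef]; ring
    rw [h1]
    have h2 : 2 * H * (τ ^ (2*H : ℝ) * ((τ * l)⁻¹ * (τ * l)⁻¹))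
        ≤ 2 * H * (τ ^ (2*H + β - 1) * l ^ (β - 1)) := by
      apply mul_le_mul_of_nonneg_left hcore
      linarith
    have h3 : 2 * H * (τ ^ (2*H + β - 1) * l ^ (β - 1)) ≤ 2 * τ ^ (2*H + β - 1) * l ^ (β - 1) := by
      nlinarith
    linarith
  calc (∑ i ∈ Finset.range m, ∑ j ∈ Finset.range m,
      ∫ v in Set.Ioo ((j : ℝ) * τ) (((j : ℝ) + 1) * τ),
        ∫ u in Set.Ioo ((i : ℝ) * τ) (((i : ℝ) + 1) * τ),
          w ^ (m - i) * w ^ (m - j) * (c * |u - v| ^ p))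
      ≤ ((∑ i ∈ Finset.range m, w ^ (m - i)) * (∑ j ∈ Finset.range m, w ^ (m - j))) * E := hsum
    _ ≤ ((τ * l)⁻¹ * (τ * l)⁻¹) * E := hstep
    _ ≤ 2 * τ ^ (2*H + β - 1) * l ^ (β - 1) := hfin
end
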